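/- arXiv:0712.2435 — 3 statements merged into one kernel-verified Lean document; each statement's English description precedes it below -/
import Mathlib

section
/- For every index a ∈ {0,1,2,3}, the entrywise complex conjugates of the matrices Γ_{L|a} and Γ_{R|a} satisfy (Γ_{L|a})* = −Γ_{R|a} and (Γ_{R|a})* = −Γ_{L|a}. -/
noncomputable section

open Matrix Quaternion

/-- The basis `e_a = (i·1, e₁, e₂, e₃)` of the complexified quaternions `ℂ ⊗ ℍ`,
realized as quaternions with complex coefficients.  Here `e 0` is the complex
imaginary unit times the quaternion `1`, and `e 1, e 2, e 3` are the quaternion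
imaginary units (satisfying `eᵢ eⱼ = -δᵢⱼ + εᵢⱼᵏ eₖ`). -/
def e : Fin 4 → Quaternion ℂ
  | 0 => ⟨Complex.I, 0, 0, 0⟩
  | 1 => ⟨0, 1, 0, 0⟩
  | 2 => ⟨0, 0, 1, 0⟩
  | 3 => ⟨0, 0, 0, 1⟩

/-- The ℂ-bilinear inner product, defined by `2⟨x,y⟩ = x·ȳ + y·x̄` (a scalar in ℂ,
extracted as the real quaternion component).  Here `star` is quaternionic
conjugation, which is ℂ-linear on `Quaternion ℂ` (it fixes `re` and negates the
imaginary quaternion components). -/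
def ip (x y : Quaternion ℂ) : ℂ := (x * star y + y * star x).re / 2

/-- `(Γ_{L|a})_{cd} = ⟨e_c, e_a e_d⟩`. -/
def ΓL (a : Fin 4) : Matrix (Fin 4) (Fin 4) ℂ := Matrix.of fun c d => ip (e c) (e a * e d)

/-- `(Γ_{R|a})_{cd} = ⟨e_c, e_d e_a⟩`. -/
def ΓR (a : Fin 4) : Matrix (Fin 4) (Fin 4) ℂ := Matrix.of fun c d => ip (e c) (e d * e a)

lemma ip_eq (x y : Quaternion ℂ) :
    ip x y = x.re * y.re + x.imI * y.imI + x.imJ * y.imJ + x.imK * y.imK := by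
  simp [ip, Quaternion.re_mul]
  ring

set_option maxHeartbeats 4000000 in
/-- Eq. (3a): `(Γ_{L|a})* = -Γ_{R|a}` and `(Γ_{R|a})* = -Γ_{L|a}`
(entrywise complex conjugation). -/
theorem gamma_complex_conj (a : Fin 4) :
    (ΓL a).map (starRingEnd ℂ) = -ΓR a ∧ (ΓR a).map (starRingEnd ℂ) = -ΓL a := by
  constructor <;>
  · ext c d
    fin_cases a <;> fin_cases c <;> fin_cases d <;>
      simp only [ΓL, ΓR, Matrix.map_apply, Matrix.neg_apply, Matrix.of_apply, ip_eq,
        Quaternion.re_mul, Quaternion.imI_mul, Quaternion.imJ_mul, Quaternion.imK_mul] <;>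
      simp [e, Complex.ext_iff]
end
end

section
/- For all indices a,b ∈ {0,1,2,3}, the entrywise complex conjugates of the matrices Σ_{L|ab} and Σ_{R|ab} satisfy (Σ_{L|ab})* = −Σ_{R|ab} and (Σ_{R|ab})* = −Σ_{L|ab}. -/
noncomputable section

open Matrix Quaternion

/-- `4i (Σ_{L|ab})_{cd} = ⟨e_a e_c, e_b e_d⟩ - ⟨e_a e_d, e_b e_c⟩`. -/
def SigmaL (a b : Fin 4) : Matrix (Fin 4) (Fin 4) ℂ :=
  Matrix.of fun c d => (ip (e a * e c) (e b * e d) - ip (e a * e d) (e b * e c)) / (4 * Complex.I)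

/-- `4i (Σ_{R|ab})_{cd} = ⟨e_c e_a, e_d e_b⟩ - ⟨e_d e_a, e_c e_b⟩`. -/
def SigmaR (a b : Fin 4) : Matrix (Fin 4) (Fin 4) ℂ :=
  Matrix.of fun c d => (ip (e c * e a) (e d * e b) - ip (e d * e a) (e c * e b)) / (4 * Complex.I)


/-- Componentwise complex conjugation on `Quaternion ℂ`. -/
def cq (x : Quaternion ℂ) : Quaternion ℂ :=
  ⟨starRingEnd ℂ x.re, starRingEnd ℂ x.imI, starRingEnd ℂ x.imJ, starRingEnd ℂ x.imK⟩

lemma conj_ip (x y : Quaternion ℂ) : starRingEnd ℂ (ip x y) = ip (cq x) (cq y) := by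
  simp only [ip, Quaternion.re_mul, Quaternion.re_star, Quaternion.imI_star,
    Quaternion.imJ_star, Quaternion.imK_star, Quaternion.re_add]
  simp only [cq, map_div₀, map_add, map_sub, _root_.map_mul,
    map_neg, map_ofNat]

lemma cq_mul (x y : Quaternion ℂ) : cq (x * y) = cq x * cq y := by
  ext <;>
    simp [Quaternion.re_mul, Quaternion.imI_mul, Quaternion.imJ_mul, Quaternion.imK_mul] <;>
    simp [cq, Quaternion.re_mul, Quaternion.imI_mul, Quaternion.imJ_mul, Quaternion.imK_mul,
      map_add, map_sub, _root_.map_mul, map_neg]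

lemma cq_e (a : Fin 4) : cq (e a) = -star (e a) := by
  ext <;> simp only [Quaternion.re_neg, Quaternion.imI_neg, Quaternion.imJ_neg, Quaternion.imK_neg,
    Quaternion.re_star, Quaternion.imI_star, Quaternion.imJ_star, Quaternion.imK_star] <;>
    fin_cases a <;> simp [cq, e]

lemma ip_star_star (x y : Quaternion ℂ) : ip (star x) (star y) = ip x y := by
  simp only [ip, Quaternion.re_mul, Quaternion.re_star, Quaternion.imI_star, Quaternion.imJ_star,
    Quaternion.imK_star, star_star, Quaternion.re_add]
  ring

/-- Eq. (10a): `(Σ_{L|ab})* = -Σ_{R|ab}` and `(Σ_{R|ab})* = -Σ_{L|ab}`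
(entrywise complex conjugation). -/
theorem sigma_complex_conj (a b : Fin 4) :
    (SigmaL a b).map (starRingEnd ℂ) = -SigmaR a b ∧ (SigmaR a b).map (starRingEnd ℂ) = -SigmaL a b := by
  have key : ∀ u v w z : Fin 4,
      starRingEnd ℂ (ip (e u * e v) (e w * e z)) = ip (e v * e u) (e z * e w) := by
    intro u v w z
    rw [conj_ip, cq_mul, cq_mul, cq_e, cq_e, cq_e, cq_e]
    rw [neg_mul_neg (star (e u)) (star (e v)), neg_mul_neg (star (e w)) (star (e z)),
      ← StarMul.star_mul (e v) (e u), ← StarMul.star_mul (e z) (e w), ip_star_star]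
  constructor <;> ext c d <;>
    simp only [SigmaL, SigmaR, Matrix.map_apply, Matrix.of_apply, Matrix.neg_apply, map_div₀,
      map_sub, _root_.map_mul, Complex.conj_I, map_ofNat, key, mul_neg, div_neg]
end
end

section
/- For all x₁, x₂, x₃ in the complexified quaternions ℂ⊗ℍ and for X either of the two triple cross products X_L, X_R: (i) orthogonality: ⟨X(x₁,x₂,x₃), x_i⟩ = 0 for each i ∈ {1,2,3}; (ii) the generalized Pythagorean property: det(⟨x_i, x_j⟩)_{i,j=1,2,3} = ⟨X(x₁,x₂,x₃), X(x₁,x₂,x₃)⟩. -/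
noncomputable section

open Matrix Quaternion

/-- The triple cross product `X_L`, defined by
`3! · X_L(x,y,z) = x(ȳz - z̄y) + y(z̄x - x̄z) + z(x̄y - ȳx)`. -/
def XL (x y z : Quaternion ℂ) : Quaternion ℂ :=
  ((6 : ℂ)⁻¹) • (x * (star y * z - star z * y) + y * (star z * x - star x * z)
    + z * (star x * y - star y * x))

/-- The triple cross product `X_R`, defined by
`3! · X_R(x,y,z) = (xȳ - yx̄)z + (yz̄ - zȳ)x + (zx̄ - xz̄)y`. -/
def XR (x y z : Quaternion ℂ) : Quaternion ℂ :=
  ((6 : ℂ)⁻¹) • ((x * star y - y * star x) * z + (y * star z - z * star y) * x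
    + (z * star x - x * star z) * y)

set_option maxHeartbeats 4000000

/-- The triple cross products `X_L` and `X_R` possess (i) the orthogonality property
`⟨X(x₁,x₂,x₃), xᵢ⟩ = 0`, and (ii) the generalized Pythagorean property
`det(⟨xᵢ,xⱼ⟩) = ⟨X(x₁,x₂,x₃), X(x₁,x₂,x₃)⟩`. -/
theorem cross_product_properties (x₁ x₂ x₃ : Quaternion ℂ) :
    (ip (XL x₁ x₂ x₃) x₁ = 0 ∧ ip (XL x₁ x₂ x₃) x₂ = 0 ∧ ip (XL x₁ x₂ x₃) x₃ = 0) ∧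
    (ip (XR x₁ x₂ x₃) x₁ = 0 ∧ ip (XR x₁ x₂ x₃) x₂ = 0 ∧ ip (XR x₁ x₂ x₃) x₃ = 0) ∧
    Matrix.det (Matrix.of fun i j : Fin 3 => ip (![x₁, x₂, x₃] i) (![x₁, x₂, x₃] j))
        = ip (XL x₁ x₂ x₃) (XL x₁ x₂ x₃) ∧
    Matrix.det (Matrix.of fun i j : Fin 3 => ip (![x₁, x₂, x₃] i) (![x₁, x₂, x₃] j))
        = ip (XR x₁ x₂ x₃) (XR x₁ x₂ x₃) := by
  refine ⟨⟨?_, ?_, ?_⟩, ⟨?_, ?_, ?_⟩, ?_, ?_⟩ <;>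
  · simp only [Matrix.det_fin_three, Matrix.of_apply, Matrix.cons_val', Matrix.cons_val_zero,
      Matrix.cons_val_one, Matrix.head_cons, Matrix.cons_val_two, Matrix.tail_cons,
      Matrix.empty_val', Matrix.cons_val_fin_one, Matrix.head_fin_const,
      ip, XL, XR, Quaternion.re_mul, Quaternion.imI_mul, Quaternion.imJ_mul,
      Quaternion.imK_mul, Quaternion.re_add, Quaternion.imI_add, Quaternion.imJ_add,
      Quaternion.imK_add, Quaternion.re_sub, Quaternion.imI_sub, Quaternion.imJ_sub,
      Quaternion.imK_sub, Quaternion.re_smul, Quaternion.imI_smul, Quaternion.imJ_smul,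
      Quaternion.imK_smul, Quaternion.re_star, Quaternion.imI_star, Quaternion.imJ_star,
      Quaternion.imK_star, smul_eq_mul,
      QuaternionAlgebra.re_mul, QuaternionAlgebra.imI_mul, QuaternionAlgebra.imJ_mul, QuaternionAlgebra.imK_mul, QuaternionAlgebra.re_add, QuaternionAlgebra.imI_add, QuaternionAlgebra.imJ_add, QuaternionAlgebra.imK_add, QuaternionAlgebra.re_sub, QuaternionAlgebra.imI_sub, QuaternionAlgebra.imJ_sub, QuaternionAlgebra.imK_sub, QuaternionAlgebra.re_smul, QuaternionAlgebra.imI_smul, QuaternionAlgebra.imJ_smul, QuaternionAlgebra.imK_smul, QuaternionAlgebra.re_star, QuaternionAlgebra.imI_star, QuaternionAlgebra.imJ_star, QuaternionAlgebra.imK_star]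
    ring
end
end
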